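/- For n = 3, define h₀(x) = −√3/3 + (x²(1+x)/(1+x+x²))·(1/(1−x+x²)^{3/2} − 1/(1+x)³) and h₁(x) = √3/(3(1−x³)) − (x³/(1−x³))·(1/(1+x)² + (2−x)/(1−x+x²)^{3/2}). Then for every x > 1 one has h₀′(x) < 0 and h₀′(x) + h₁′(x) < 0; consequently, for every ε ∈ (0,1), the function x ↦ h₀(x) + (1−ε)·h₁(x) is strictly decreasing on (1, ∞), so for every μ the equation h₀(x) + (1−ε)·h₁(x) = μ has at most one solution x > 1. -/

import Mathlib

set_option maxHeartbeats 2000000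

/-- For `n = 3`:
`h₀(x) = −√3/3 + (x²(1+x)/(1+x+x²))·(1/(1−x+x²)^{3/2} − 1/(1+x)³)`. -/
noncomputable def h0₃ (x : ℝ) : ℝ :=
  -(Real.sqrt 3 / 3) + x ^ 2 * (1 + x) / (1 + x + x ^ 2) *
    (1 / (1 - x + x ^ 2) ^ ((3 : ℝ) / 2) - 1 / (1 + x) ^ 3)

/-- For `n = 3`:
`h₁(x) = √3/(3(1−x³)) − (x³/(1−x³))·(1/(1+x)² + (2−x)/(1−x+x²)^{3/2})`. -/
noncomputable def h1₃ (x : ℝ) : ℝ :=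
  Real.sqrt 3 / (3 * (1 - x ^ 3)) - x ^ 3 / (1 - x ^ 3) *
    (1 / (1 + x) ^ 2 + (2 - x) / (1 - x + x ^ 2) ^ ((3 : ℝ) / 2))

/-- Closed form for `h₀′`. -/
noncomputable def d0₃ (x : ℝ) : ℝ :=
  x * (x - 1) * (2 * x ^ 2 + 3 * x + 2) / ((1 + x + x ^ 2) ^ 2 * (1 + x) ^ 3)
    - x * (x - 1) * (4 * x ^ 4 + 11 * x ^ 3 + 11 * x ^ 2 + 11 * x + 4) /
      (2 * (1 + x + x ^ 2) ^ 2 * (1 - x + x ^ 2) ^ 2 * Real.sqrt (1 - x + x ^ 2))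

/-- Closed form for `h₁′`. -/
noncomputable def d1₃ (x : ℝ) : ℝ :=
  Real.sqrt 3 * x ^ 2 / (1 - x ^ 3) ^ 2
    + (-3 * x ^ 2 - x ^ 3 - 2 * x ^ 6) / ((x - 1) ^ 2 * (1 + x + x ^ 2) ^ 2 * (1 + x) ^ 3)
    + (-12 * x ^ 2 + 14 * x ^ 3 - 5 * x ^ 4 + 2 * x ^ 5 + 4 * x ^ 6 - 13 * x ^ 7 + 4 * x ^ 8) /
      (2 * (x - 1) ^ 2 * (1 + x + x ^ 2) ^ 2 * (1 - x + x ^ 2) ^ 2 * Real.sqrt (1 - x + x ^ 2))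

lemma hasDerivAt_h0₃ {x : ℝ} (hx : 1 < x) : HasDerivAt h0₃ (d0₃ x) x := by
  have hx0 : (0:ℝ) < x := by linarith
  have hq : (0:ℝ) < 1 - x + x ^ 2 := by nlinarith
  have hu : (0:ℝ) < 1 + x := by linarith
  have hp : (0:ℝ) < 1 + x + x ^ 2 := by nlinarith
  have hs : 0 < Real.sqrt (1 - x + x ^ 2) := Real.sqrt_pos.2 hq
  have hs2 : Real.sqrt (1 - x + x ^ 2) ^ 2 = 1 - x + x ^ 2 := Real.sq_sqrt hq.le
  have hq12 : (1 - x + x ^ 2) ^ ((3:ℝ)/2 - 1) = Real.sqrt (1 - x + x ^ 2) := by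
    rw [show (3:ℝ)/2 - 1 = 1/2 by norm_num, ← Real.sqrt_eq_rpow]
  have hq32 : (1 - x + x ^ 2) ^ ((3:ℝ)/2) = (1 - x + x ^ 2) * Real.sqrt (1 - x + x ^ 2) := by
    rw [show (3:ℝ)/2 = 1 + 1/2 by norm_num, Real.rpow_add hq, Real.rpow_one, ← Real.sqrt_eq_rpow]
  have hQ : (1 - x + x ^ 2) ^ ((3:ℝ)/2) ≠ 0 := by
    rw [hq32]; exact (mul_pos hq hs).ne'
  have hA : HasDerivAt (fun y : ℝ => 1 - y + y ^ 2) (2 * x - 1) x := by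
    have h := ((hasDerivAt_const x (1:ℝ)).sub (hasDerivAt_id x)).add (hasDerivAt_pow 2 x)
    refine h.congr_deriv ?_
    push_cast; ring
  have hrpow : HasDerivAt (fun y : ℝ => (1 - y + y ^ 2) ^ ((3:ℝ)/2))
      ((2 * x - 1) * ((3:ℝ)/2) * Real.sqrt (1 - x + x ^ 2)) x := by
    have h := hA.rpow_const (p := (3:ℝ)/2) (Or.inr (by norm_num))
    rwa [hq12] at h
  have hmain := (hasDerivAt_const x (-(Real.sqrt 3 / 3))).add
    ((((hasDerivAt_pow 2 x).mul ((hasDerivAt_const x (1:ℝ)).add (hasDerivAt_id x))).div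
        (((hasDerivAt_const x (1:ℝ)).add (hasDerivAt_id x)).add (hasDerivAt_pow 2 x)) hp.ne').mul
      (((hasDerivAt_const x (1:ℝ)).div hrpow hQ).sub
        ((hasDerivAt_const x (1:ℝ)).div (((hasDerivAt_const x (1:ℝ)).add (hasDerivAt_id x)).pow 3)
          (pow_ne_zero 3 hu.ne'))))
  refine hmain.congr_deriv ?_
  rw [hq32]
  unfold d0₃
  simp only [Pi.add_apply, Pi.sub_apply, Pi.mul_apply, Pi.div_apply, Pi.pow_apply, id_eq]
  rw [hq32]
  push_cast
  field_simp
  ring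

lemma hasDerivAt_h1₃ {x : ℝ} (hx : 1 < x) : HasDerivAt h1₃ (d1₃ x) x := by
  have hx0 : (0:ℝ) < x := by linarith
  have hq : (0:ℝ) < 1 - x + x ^ 2 := by nlinarith
  have hu : (0:ℝ) < 1 + x := by linarith
  have hp : (0:ℝ) < 1 + x + x ^ 2 := by nlinarith
  have hw : 1 - x ^ 3 < 0 := by nlinarith
  have hwne : (1 - x ^ 3) ≠ 0 := hw.ne
  have hx1 : (0:ℝ) < x - 1 := by linarith
  have hs : 0 < Real.sqrt (1 - x + x ^ 2) := Real.sqrt_pos.2 hq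
  have hs2 : Real.sqrt (1 - x + x ^ 2) ^ 2 = 1 - x + x ^ 2 := Real.sq_sqrt hq.le
  have hq12 : (1 - x + x ^ 2) ^ ((3:ℝ)/2 - 1) = Real.sqrt (1 - x + x ^ 2) := by
    rw [show (3:ℝ)/2 - 1 = 1/2 by norm_num, ← Real.sqrt_eq_rpow]
  have hq32 : (1 - x + x ^ 2) ^ ((3:ℝ)/2) = (1 - x + x ^ 2) * Real.sqrt (1 - x + x ^ 2) := by
    rw [show (3:ℝ)/2 = 1 + 1/2 by norm_num, Real.rpow_add hq, Real.rpow_one, ← Real.sqrt_eq_rpow]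
  have hQ : (1 - x + x ^ 2) ^ ((3:ℝ)/2) ≠ 0 := by
    rw [hq32]; exact (mul_pos hq hs).ne'
  have hA : HasDerivAt (fun y : ℝ => 1 - y + y ^ 2) (2 * x - 1) x := by
    have h := ((hasDerivAt_const x (1:ℝ)).sub (hasDerivAt_id x)).add (hasDerivAt_pow 2 x)
    refine h.congr_deriv ?_
    push_cast; ring
  have hrpow : HasDerivAt (fun y : ℝ => (1 - y + y ^ 2) ^ ((3:ℝ)/2))
      ((2 * x - 1) * ((3:ℝ)/2) * Real.sqrt (1 - x + x ^ 2)) x := by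
    have h := hA.rpow_const (p := (3:ℝ)/2) (Or.inr (by norm_num))
    rwa [hq12] at h
  have hW : HasDerivAt (fun y : ℝ => 1 - y ^ 3) (0 - (3:ℕ) * x ^ (3 - 1)) x :=
    (hasDerivAt_const x (1:ℝ)).sub (hasDerivAt_pow 3 x)
  have h3wne : (3:ℝ) * (1 - x ^ 3) ≠ 0 := by
    intro h; apply hwne; linarith [h]
  have hmain := ((hasDerivAt_const x (Real.sqrt 3)).div (hW.const_mul (3:ℝ)) h3wne).sub
    (((hasDerivAt_pow 3 x).div hW hwne).mul
      (((hasDerivAt_const x (1:ℝ)).div (((hasDerivAt_const x (1:ℝ)).add (hasDerivAt_id x)).pow 2)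
          (pow_ne_zero 2 hu.ne')).add
        (((hasDerivAt_const x (2:ℝ)).sub (hasDerivAt_id x)).div hrpow hQ)))
  refine hmain.congr_deriv ?_
  rw [hq32]
  unfold d1₃
  simp only [Pi.add_apply, Pi.sub_apply, Pi.mul_apply, Pi.div_apply, Pi.pow_apply, id_eq]
  rw [hq32]
  push_cast
  field_simp
  ring

lemma polyA {x : ℝ} (hx : 1 < x) :
    0 < (4 * x ^ 4 + 11 * x ^ 3 + 11 * x ^ 2 + 11 * x + 4) ^ 2 * (1 + x) ^ 6
      - 4 * (2 * x ^ 2 + 3 * x + 2) ^ 2 * (1 - x + x ^ 2) ^ 5 := by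
  have ht : (0:ℝ) < x - 1 := by linarith
  have e : (4 * x ^ 4 + 11 * x ^ 3 + 11 * x ^ 2 + 11 * x + 4) ^ 2 * (1 + x) ^ 6
      - 4 * (2 * x ^ 2 + 3 * x + 2) ^ 2 * (1 - x + x ^ 2) ^ 5
      = 107388 + 751716 * (x - 1) + 2476440 * (x - 1) ^ 2 + 5086332 * (x - 1) ^ 3
        + 7269516 * (x - 1) ^ 4 + 7638768 * (x - 1) ^ 5 + 6076305 * (x - 1) ^ 6
        + 3709296 * (x - 1) ^ 7 + 1740996 * (x - 1) ^ 8 + 622242 * (x - 1) ^ 9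
        + 165240 * (x - 1) ^ 10 + 31032 * (x - 1) ^ 11 + 3717 * (x - 1) ^ 12
        + 216 * (x - 1) ^ 13 := by ring
  rw [e]
  have h2 := pow_pos ht 2; have h3 := pow_pos ht 3; have h4 := pow_pos ht 4
  have h5 := pow_pos ht 5; have h6 := pow_pos ht 6; have h7 := pow_pos ht 7
  have h8 := pow_pos ht 8; have h9 := pow_pos ht 9; have h10 := pow_pos ht 10
  have h11 := pow_pos ht 11; have h12 := pow_pos ht 12; have h13 := pow_pos ht 13
  linarith

lemma polyB {x : ℝ} (hx : 1 < x) :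
    0 < 225 * (4 * x - 13 * x ^ 2 + 4 * x ^ 3 + 2 * x ^ 4 - 5 * x ^ 5 + 14 * x ^ 6 - 12 * x ^ 7) ^ 2
          * (1 + x) ^ 6
      - 4 * (-30 * x + 26 * x ^ 2 + 78 * x ^ 3 + 63 * x ^ 4 - 19 * x ^ 5) ^ 2
          * (1 - x + x ^ 2) ^ 5 := by
  have ht : (0:ℝ) < x - 1 := by linarith
  have e : 225 * (4 * x - 13 * x ^ 2 + 4 * x ^ 3 + 2 * x ^ 4 - 5 * x ^ 5 + 14 * x ^ 6 - 12 * x ^ 7) ^ 2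
          * (1 + x) ^ 6
      - 4 * (-30 * x + 26 * x ^ 2 + 78 * x ^ 3 + 63 * x ^ 4 - 19 * x ^ 5) ^ 2
          * (1 - x + x ^ 2) ^ 5
      = 462704 + 5552448 * (x - 1) + 36545212 * (x - 1) ^ 2 + 171361948 * (x - 1) ^ 3
        + 618312372 * (x - 1) ^ 4 + 1778742008 * (x - 1) ^ 5 + 4167073252 * (x - 1) ^ 6
        + 8027617428 * (x - 1) ^ 7 + 12734325197 * (x - 1) ^ 8 + 16594648938 * (x - 1) ^ 9
        + 17708935689 * (x - 1) ^ 10 + 15424983822 * (x - 1) ^ 11 + 10921554968 * (x - 1) ^ 12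
        + 6247540542 * (x - 1) ^ 13 + 2859682753 * (x - 1) ^ 14 + 1031774210 * (x - 1) ^ 15
        + 286650729 * (x - 1) ^ 16 + 59085676 * (x - 1) ^ 17 + 8487904 * (x - 1) ^ 18
        + 754716 * (x - 1) ^ 19 + 30956 * (x - 1) ^ 20 := by ring
  rw [e]
  have h2 := pow_pos ht 2; have h3 := pow_pos ht 3; have h4 := pow_pos ht 4
  have h5 := pow_pos ht 5; have h6 := pow_pos ht 6; have h7 := pow_pos ht 7
  have h8 := pow_pos ht 8; have h9 := pow_pos ht 9; have h10 := pow_pos ht 10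
  have h11 := pow_pos ht 11; have h12 := pow_pos ht 12; have h13 := pow_pos ht 13
  have h14 := pow_pos ht 14; have h15 := pow_pos ht 15; have h16 := pow_pos ht 16
  have h17 := pow_pos ht 17; have h18 := pow_pos ht 18; have h19 := pow_pos ht 19
  have h20 := pow_pos ht 20
  linarith

lemma polyHn {x : ℝ} (hx : 1 < x) :
    4 * x - 13 * x ^ 2 + 4 * x ^ 3 + 2 * x ^ 4 - 5 * x ^ 5 + 14 * x ^ 6 - 12 * x ^ 7 < 0 := by
  have ht : (0:ℝ) < x - 1 := by linarith
  have e : -(4 * x - 13 * x ^ 2 + 4 * x ^ 3 + 2 * x ^ 4 - 5 * x ^ 5 + 14 * x ^ 6 - 12 * x ^ 7)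
      = 6 + 27 * (x - 1) + 81 * (x - 1) ^ 2 + 178 * (x - 1) ^ 3 + 233 * (x - 1) ^ 4
        + 173 * (x - 1) ^ 5 + 70 * (x - 1) ^ 6 + 12 * (x - 1) ^ 7 := by ring
  have h2 := pow_pos ht 2; have h3 := pow_pos ht 3; have h4 := pow_pos ht 4
  have h5 := pow_pos ht 5; have h6 := pow_pos ht 6; have h7 := pow_pos ht 7
  nlinarith [e]

lemma d0₃_neg {x : ℝ} (hx : 1 < x) : d0₃ x < 0 := by
  have hx0 : (0:ℝ) < x := by linarith
  have hx1 : (0:ℝ) < x - 1 := by linarith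
  have hq : (0:ℝ) < 1 - x + x ^ 2 := by nlinarith
  have hu : (0:ℝ) < 1 + x := by linarith
  have hp : (0:ℝ) < 1 + x + x ^ 2 := by nlinarith
  have hs : 0 < Real.sqrt (1 - x + x ^ 2) := Real.sqrt_pos.2 hq
  have hs2 : Real.sqrt (1 - x + x ^ 2) ^ 2 = 1 - x + x ^ 2 := Real.sq_sqrt hq.le
  set s := Real.sqrt (1 - x + x ^ 2) with hsdef
  have hB : 0 < x * (x - 1) * (4 * x ^ 4 + 11 * x ^ 3 + 11 * x ^ 2 + 11 * x + 4) := by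
    have h4 := pow_pos hx0 4; have h3 := pow_pos hx0 3; have h2 := pow_pos hx0 2
    apply mul_pos (mul_pos hx0 hx1)
    linarith
  have key : x * (x - 1) * (2 * x ^ 2 + 3 * x + 2) * (2 * (1 + x + x ^ 2) ^ 2 * (1 - x + x ^ 2) ^ 2 * s)
      < x * (x - 1) * (4 * x ^ 4 + 11 * x ^ 3 + 11 * x ^ 2 + 11 * x + 4) * ((1 + x + x ^ 2) ^ 2 * (1 + x) ^ 3) := by
    have hRpos : 0 < x * (x - 1) * (4 * x ^ 4 + 11 * x ^ 3 + 11 * x ^ 2 + 11 * x + 4) * ((1 + x + x ^ 2) ^ 2 * (1 + x) ^ 3) :=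
      mul_pos hB (mul_pos (pow_pos hp 2) (pow_pos hu 3))
    refine lt_of_pow_lt_pow_left₀ 2 hRpos.le ?_
    have e1 : (x * (x - 1) * (2 * x ^ 2 + 3 * x + 2) * (2 * (1 + x + x ^ 2) ^ 2 * (1 - x + x ^ 2) ^ 2 * s)) ^ 2
        = (x * (x - 1) * (2 * x ^ 2 + 3 * x + 2)) ^ 2 * (2 * (1 + x + x ^ 2) ^ 2 * (1 - x + x ^ 2) ^ 2) ^ 2
          * (1 - x + x ^ 2) := by
      linear_combination (x * (x - 1) * (2 * x ^ 2 + 3 * x + 2) * (2 * (1 + x + x ^ 2) ^ 2 * (1 - x + x ^ 2) ^ 2)) ^ 2 * hs2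
    rw [e1]
    have hA := polyA hx
    have hposmul : 0 < (x ^ 2 * (x - 1) ^ 2 * (1 + x + x ^ 2) ^ 4) *
        ((4 * x ^ 4 + 11 * x ^ 3 + 11 * x ^ 2 + 11 * x + 4) ^ 2 * (1 + x) ^ 6
          - 4 * (2 * x ^ 2 + 3 * x + 2) ^ 2 * (1 - x + x ^ 2) ^ 5) :=
      mul_pos (mul_pos (mul_pos (pow_pos hx0 2) (pow_pos hx1 2)) (pow_pos hp 4)) hA
    linarith [hposmul]
  unfold d0₃
  rw [← hsdef, sub_neg, div_lt_div_iff₀ (mul_pos (pow_pos hp 2) (pow_pos hu 3))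
    (mul_pos (mul_pos (mul_pos two_pos (pow_pos hp 2)) (pow_pos hq 2)) hs)]
  linarith [key]

lemma sum_neg {x : ℝ} (hx : 1 < x) : d0₃ x + d1₃ x < 0 := by
  have hx0 : (0:ℝ) < x := by linarith
  have hx1 : (0:ℝ) < x - 1 := by linarith
  have hq : (0:ℝ) < 1 - x + x ^ 2 := by nlinarith
  have hu : (0:ℝ) < 1 + x := by linarith
  have hp : (0:ℝ) < 1 + x + x ^ 2 := by nlinarith
  have hw : 1 - x ^ 3 < 0 := by nlinarith
  have hwne : (1 - x ^ 3) ≠ 0 := hw.ne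
  have hs : 0 < Real.sqrt (1 - x + x ^ 2) := Real.sqrt_pos.2 hq
  have hs2 : Real.sqrt (1 - x + x ^ 2) ^ 2 = 1 - x + x ^ 2 := Real.sq_sqrt hq.le
  set s := Real.sqrt (1 - x + x ^ 2) with hsdef
  have h3 : Real.sqrt 3 < 26 / 15 := (Real.sqrt_lt' (by norm_num)).2 (by norm_num)
  have hHn := polyHn hx
  have hM := polyB hx
  have key : 2 * (-30 * x + 26 * x ^ 2 + 78 * x ^ 3 + 63 * x ^ 4 - 19 * x ^ 5) * (1 - x + x ^ 2) ^ 2 * s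
      < 15 * (-(4 * x - 13 * x ^ 2 + 4 * x ^ 3 + 2 * x ^ 4 - 5 * x ^ 5 + 14 * x ^ 6 - 12 * x ^ 7)) * (1 + x) ^ 3 := by
    have hRpos : 0 < 15 * (-(4 * x - 13 * x ^ 2 + 4 * x ^ 3 + 2 * x ^ 4 - 5 * x ^ 5 + 14 * x ^ 6 - 12 * x ^ 7)) * (1 + x) ^ 3 :=
      mul_pos (mul_pos (by norm_num) (by linarith)) (pow_pos hu 3)
    refine lt_of_pow_lt_pow_left₀ 2 hRpos.le ?_
    have e : (2 * (-30 * x + 26 * x ^ 2 + 78 * x ^ 3 + 63 * x ^ 4 - 19 * x ^ 5) * (1 - x + x ^ 2) ^ 2 * s) ^ 2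
        = 4 * (-30 * x + 26 * x ^ 2 + 78 * x ^ 3 + 63 * x ^ 4 - 19 * x ^ 5) ^ 2 * (1 - x + x ^ 2) ^ 5 := by
      linear_combination (2 * (-30 * x + 26 * x ^ 2 + 78 * x ^ 3 + 63 * x ^ 4 - 19 * x ^ 5) * (1 - x + x ^ 2) ^ 2) ^ 2 * hs2
    rw [e]
    linarith [hM]
  have hrw : d0₃ x + d1₃ x
      = (Real.sqrt 3 - 26 / 15) * (x ^ 2 / (1 - x ^ 3) ^ 2)
        + ((-30 * x + 26 * x ^ 2 + 78 * x ^ 3 + 63 * x ^ 4 - 19 * x ^ 5)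
            / (15 * ((x - 1) ^ 2 * (1 + x + x ^ 2) ^ 2) * (1 + x) ^ 3)
          + (4 * x - 13 * x ^ 2 + 4 * x ^ 3 + 2 * x ^ 4 - 5 * x ^ 5 + 14 * x ^ 6 - 12 * x ^ 7)
            / (2 * ((x - 1) ^ 2 * (1 + x + x ^ 2) ^ 2) * (1 - x + x ^ 2) ^ 2 * s)) := by
    unfold d0₃ d1₃
    rw [← hsdef]
    field_simp
    ring
  rw [hrw]
  have t1 : (Real.sqrt 3 - 26 / 15) * (x ^ 2 / (1 - x ^ 3) ^ 2) < 0 := by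
    apply mul_neg_of_neg_of_pos (by linarith)
    apply div_pos (pow_pos hx0 2)
    have e2 : (1 - x ^ 3) ^ 2 = (x ^ 3 - 1) ^ 2 := by ring
    rw [e2]
    exact pow_pos (by nlinarith) 2
  have t2 : (-30 * x + 26 * x ^ 2 + 78 * x ^ 3 + 63 * x ^ 4 - 19 * x ^ 5)
        / (15 * ((x - 1) ^ 2 * (1 + x + x ^ 2) ^ 2) * (1 + x) ^ 3)
      + (4 * x - 13 * x ^ 2 + 4 * x ^ 3 + 2 * x ^ 4 - 5 * x ^ 5 + 14 * x ^ 6 - 12 * x ^ 7)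
        / (2 * ((x - 1) ^ 2 * (1 + x + x ^ 2) ^ 2) * (1 - x + x ^ 2) ^ 2 * s) < 0 := by
    have hident : (-30 * x + 26 * x ^ 2 + 78 * x ^ 3 + 63 * x ^ 4 - 19 * x ^ 5)
          / (15 * ((x - 1) ^ 2 * (1 + x + x ^ 2) ^ 2) * (1 + x) ^ 3)
        + (4 * x - 13 * x ^ 2 + 4 * x ^ 3 + 2 * x ^ 4 - 5 * x ^ 5 + 14 * x ^ 6 - 12 * x ^ 7)
          / (2 * ((x - 1) ^ 2 * (1 + x + x ^ 2) ^ 2) * (1 - x + x ^ 2) ^ 2 * s)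
        = (2 * (-30 * x + 26 * x ^ 2 + 78 * x ^ 3 + 63 * x ^ 4 - 19 * x ^ 5) * (1 - x + x ^ 2) ^ 2 * s
            + 15 * (4 * x - 13 * x ^ 2 + 4 * x ^ 3 + 2 * x ^ 4 - 5 * x ^ 5 + 14 * x ^ 6 - 12 * x ^ 7) * (1 + x) ^ 3)
          / (30 * ((x - 1) ^ 2 * (1 + x + x ^ 2) ^ 2) * (1 + x) ^ 3 * (1 - x + x ^ 2) ^ 2 * s) := by
      field_simp
      ring
    rw [hident]
    apply div_neg_of_neg_of_pos (by linarith [key])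
    exact mul_pos (mul_pos (mul_pos (mul_pos (by positivity)
      (mul_pos (pow_pos hx1 2) (pow_pos hp 2))) (pow_pos hu 3)) (pow_pos hq 2)) hs
  linarith

/-- For `n = 3`: for every `x > 1`, `h₀′(x) < 0` and `h₀′(x) + h₁′(x) < 0`;
hence for every `ε ∈ (0,1)` the map `x ↦ h₀(x) + (1−ε)h₁(x)` is strictly
decreasing on `(1, ∞)`, so `h₀(x) + (1−ε)h₁(x) = μ` has at most one
solution `x > 1`. -/
theorem n_eq_three_monotone :
    (∀ x : ℝ, 1 < x → deriv h0₃ x < 0 ∧ deriv h0₃ x + deriv h1₃ x < 0) ∧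
    (∀ ε ∈ Set.Ioo (0 : ℝ) 1,
      StrictAntiOn (fun x => h0₃ x + (1 - ε) * h1₃ x) (Set.Ioi 1) ∧
      ∀ μ x y : ℝ, 1 < x → 1 < y →
        h0₃ x + (1 - ε) * h1₃ x = μ → h0₃ y + (1 - ε) * h1₃ y = μ → x = y) := by
  constructor
  · intro x hx
    rw [(hasDerivAt_h0₃ hx).deriv, (hasDerivAt_h1₃ hx).deriv]
    exact ⟨d0₃_neg hx, sum_neg hx⟩
  · intro ε hε
    obtain ⟨he0, he1⟩ := hε
    have hf : ∀ x : ℝ, 1 < x →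
        HasDerivAt (fun x => h0₃ x + (1 - ε) * h1₃ x) (d0₃ x + (1 - ε) * d1₃ x) x :=
      fun x hx => (hasDerivAt_h0₃ hx).add ((hasDerivAt_h1₃ hx).const_mul (1 - ε))
    have hmono : StrictAntiOn (fun x => h0₃ x + (1 - ε) * h1₃ x) (Set.Ioi 1) := by
      apply strictAntiOn_of_deriv_neg (convex_Ioi 1)
      · intro x hx
        exact ((hf x hx).differentiableAt.continuousAt).continuousWithinAt
      · intro x hx
        rw [interior_Ioi] at hx
        rw [(hf x hx).deriv]
        have h1 := d0₃_neg hx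
        have h2 := sum_neg hx
        have h3 : (1 - ε) * (d0₃ x + d1₃ x) < 0 := mul_neg_of_pos_of_neg (by linarith) h2
        have h4 : ε * d0₃ x < 0 := mul_neg_of_pos_of_neg he0 h1
        linarith [h3, h4]
    refine ⟨hmono, ?_⟩
    intro μ x y hx hy hfx hfy
    exact hmono.injOn (Set.mem_Ioi.2 hx) (Set.mem_Ioi.2 hy) (by rw [hfx, hfy])
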